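/- For any nonnegative integer n of the form n = 4K, n = 2K, or n = K with K odd, there exists a rational number d > 0 such that the number of integer pairs (l, m) satisfying (l − d)² + m² = d² equals n. -/

import Mathlib

open Zsqrtd GaussianInt

noncomputable section
namespace Stmt9


abbrev P1 : GaussianInt := ⟨2,1⟩
abbrev P2 : GaussianInt := ⟨2,-1⟩
abbrev I : GaussianInt := ⟨0,1⟩

lemma prime_of_norm5 (z : GaussianInt) (hz : z.norm = 5) : Prime z := by
  rw [← UniqueFactorizationMonoid.irreducible_iff_prime]
  constructor
  · rw [← Zsqrtd.norm_eq_one_iff, hz]; decide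
  · intro a b hab
    have h5 : a.norm.natAbs * b.norm.natAbs = 5 := by
      rw [← Int.natAbs_mul, ← Zsqrtd.norm_mul, ← hab, hz]; rfl
    have hd : a.norm.natAbs ∣ 5 := ⟨_, h5.symm⟩
    rcases (Nat.Prime.eq_one_or_self_of_dvd (by norm_num) _ hd) with h | h
    · left; rwa [← Zsqrtd.norm_eq_one_iff]
    · right; rw [← Zsqrtd.norm_eq_one_iff]; rw [h] at h5; omega

lemma prime_P1 : Prime P1 := prime_of_norm5 _ (by decide)
lemma prime_P2 : Prime P2 := prime_of_norm5 _ (by decide)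

lemma norm_dvd {a b : GaussianInt} (h : a ∣ b) : a.norm ∣ b.norm := by
  obtain ⟨c, rfl⟩ := h; rw [Zsqrtd.norm_mul]; exact Dvd.intro _ rfl

lemma not_P1_dvd_P2 : ¬ P1 ∣ P2 := by
  intro h
  have h2 : P1 ∣ P1 - P2 := (dvd_sub_right dvd_rfl).mpr h
  have := norm_dvd h2
  revert this; decide

lemma isUnit_I : IsUnit I := IsUnit.of_mul_eq_one (a := I) ⟨0,-1⟩ (by decide)

lemma not_P1_dvd_unit_mul (j m : ℕ) : ¬ P1 ∣ I^j * P2^m := by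
  intro h
  rcases prime_P1.dvd_mul.mp h with h | h
  · have : IsUnit P1 := isUnit_of_dvd_unit h (isUnit_I.pow j)
    rw [← Zsqrtd.norm_eq_one_iff] at this
    revert this; decide
  · exact not_P1_dvd_P2 (prime_P1.dvd_of_dvd_pow h)

lemma unit_classify (z : GaussianInt) (hz : z.norm = 1) : ∃ j < 4, z = I^j := by
  obtain ⟨x, y⟩ := z
  have hx : x^2 + y^2 = 1 := by
    simpa [Zsqrtd.norm, sq] using hz
  have h1 : x^2 ≤ 1 := by nlinarith [sq_nonneg y]
  have h2 : y^2 ≤ 1 := by nlinarith [sq_nonneg x]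
  have hx1 : -1 ≤ x ∧ x ≤ 1 := by constructor <;> nlinarith
  have hy1 : -1 ≤ y ∧ y ≤ 1 := by constructor <;> nlinarith
  obtain ⟨hxa, hxb⟩ := hx1; obtain ⟨hya, hyb⟩ := hy1
  interval_cases x <;> interval_cases y <;> simp_all <;>
    first
      | exact ⟨0, by norm_num, by decide⟩
      | exact ⟨1, by norm_num, by decide⟩
      | exact ⟨2, by norm_num, by decide⟩
      | exact ⟨3, by norm_num, by decide⟩
      | omega

lemma exists_rep : ∀ (t : ℕ) (z : GaussianInt), z.norm = 5^t →
    ∃ j < 4, ∃ a ≤ t, z = I^j * P1^a * P2^(t-a) := by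
  intro t
  induction t with
  | zero =>
    intro z hz
    obtain ⟨j, hj, rfl⟩ := unit_classify z hz
    exact ⟨j, hj, 0, le_refl _, by simp⟩
  | succ t ih =>
    intro z hz
    have h5 : P1 ∣ z ∨ P2 ∣ z := by
      have hd : P1 ∣ z * star z := by
        rw [← Zsqrtd.norm_eq_mul_conj, hz]
        push_cast
        exact Dvd.dvd.trans ⟨P2, by decide⟩ (dvd_pow_self _ (Nat.succ_ne_zero t))
      rcases prime_P1.dvd_mul.mp hd with h | h
      · exact Or.inl h
      · right
        obtain ⟨w, hw⟩ := h
        refine ⟨star w, ?_⟩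
        have := congrArg star hw
        rw [star_star, star_mul'] at this
        rw [this]; rfl
    have hnz : (5:ℤ) ^ t * 5 = 5 ^ (t+1) := by ring
    rcases h5 with ⟨w, rfl⟩ | ⟨w, rfl⟩
    · have hw : w.norm = 5 ^ t := by
        have := hz
        rw [Zsqrtd.norm_mul, show (P1).norm = 5 by decide] at this
        have h5' : (5:ℤ) * w.norm = 5 * 5^t := by rw [this]; ring
        exact mul_left_cancel₀ (by norm_num) h5'
      obtain ⟨j, hj, a, ha, rfl⟩ := ih w hw
      exact ⟨j, hj, a+1, by omega, by rw [show t + 1 - (a+1) = t - a by omega]; ring⟩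
    · have hw : w.norm = 5 ^ t := by
        have := hz
        rw [Zsqrtd.norm_mul, show (P2).norm = 5 by decide] at this
        have h5' : (5:ℤ) * w.norm = 5 * 5^t := by rw [this]; ring
        exact mul_left_cancel₀ (by norm_num) h5'
      obtain ⟨j, hj, a, ha, rfl⟩ := ih w hw
      exact ⟨j, hj, a, by omega, by rw [show t + 1 - a = (t-a)+1 by omega]; ring⟩

lemma pow_I_inj {j k : ℕ} (hj : j < 4) (hk : k < 4) (h : I^j = I^k) : j = k := by
  interval_cases j <;> interval_cases k <;> first | rfl | (exfalso; revert h; decide)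

lemma P1_ne_zero : P1 ≠ 0 := by decide
lemma P2_ne_zero : P2 ≠ 0 := by decide

lemma uniq : ∀ (a b c d j k : ℕ), j < 4 → k < 4 → a + b = c + d →
    I^j * P1^a * P2^b = I^k * P1^c * P2^d → j = k ∧ a = c := by
  intro a
  induction a with
  | zero =>
    intro b c d j k hj hk hsum heq
    have hc : c = 0 := by
      by_contra hc
      apply not_P1_dvd_unit_mul j b
      have hdvd : P1 ∣ I^k * P1^c * P2^d :=
        Dvd.dvd.mul_right (dvd_mul_of_dvd_right (dvd_pow_self P1 hc) _) _
      rw [← heq] at hdvd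
      simpa using hdvd
    subst hc
    have hbd : b = d := by omega
    subst hbd
    refine ⟨?_, rfl⟩
    apply pow_I_inj hj hk
    have h2 : I^j * P2^b = I^k * P2^b := by linear_combination heq
    exact mul_right_cancel₀ (pow_ne_zero _ P2_ne_zero) h2
  | succ a ih =>
    intro b c d j k hj hk hsum heq
    have hc : c ≠ 0 := by
      intro hc
      subst hc
      apply not_P1_dvd_unit_mul k d
      have hdvd : P1 ∣ I^j * P1^(a+1) * P2^b :=
        Dvd.dvd.mul_right (dvd_mul_of_dvd_right (dvd_pow_self P1 (Nat.succ_ne_zero a)) _) _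
      rw [heq] at hdvd
      simpa using hdvd
    obtain ⟨c', rfl⟩ := Nat.exists_eq_succ_of_ne_zero hc
    rw [Nat.succ_eq_add_one] at heq
    have h2 : P1 * (I^j * P1^a * P2^b) = P1 * (I^k * P1^c' * P2^d) := by
      linear_combination heq
    obtain ⟨hjk, hac⟩ := ih b c' d j k hj hk (by omega) (mul_left_cancel₀ P1_ne_zero h2)
    exact ⟨hjk, by omega⟩

lemma norm_pow (z : GaussianInt) (n : ℕ) : (z^n).norm = z.norm^n :=
  map_pow Zsqrtd.normMonoidHom z n

lemma card_norm_eq (t : ℕ) :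
    Nat.card {z : GaussianInt // z.norm = 5^t} = 4 * (t+1) := by
  have key : ∀ p : Fin 4 × Fin (t+1),
      (I^(p.1:ℕ) * P1^(p.2:ℕ) * P2^(t-(p.2:ℕ))).norm = 5^t := by
    intro p
    rw [Zsqrtd.norm_mul, Zsqrtd.norm_mul, norm_pow, norm_pow, norm_pow,
      show (I).norm = 1 by decide, show (P1).norm = 5 by decide,
      show (P2).norm = 5 by decide, one_pow, one_mul, ← pow_add]
    congr 1
    omega
  have hf : Function.Bijective (fun p : Fin 4 × Fin (t+1) =>
      (⟨I^(p.1:ℕ) * P1^(p.2:ℕ) * P2^(t-(p.2:ℕ)), key p⟩ :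
        {z : GaussianInt // z.norm = 5^t})) := by
    constructor
    · rintro ⟨j, a⟩ ⟨k, c⟩ h
      have h' := Subtype.ext_iff.mp h
      simp only at h'
      obtain ⟨hjk, hac⟩ := uniq (a:ℕ) (t-(a:ℕ)) (c:ℕ) (t-(c:ℕ)) j k j.isLt k.isLt
        (by omega) h'
      ext
      · exact hjk
      · exact hac
    · rintro ⟨z, hz⟩
      obtain ⟨j, hj, a, ha, rfl⟩ := exists_rep t z hz
      exact ⟨(⟨j, hj⟩, ⟨a, by omega⟩), rfl⟩
  rw [← Nat.card_eq_of_bijective _ hf]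
  simp [Nat.card_eq_fintype_card]


def S (p : ℤ) : Set (ℤ × ℤ) := {xy | xy.1^2 + xy.2^2 = p^2}
def T (p : ℤ) : Set (ℤ × ℤ) := {xy | xy.1^2 + xy.2^2 = p^2 ∧ 2 ∣ (xy.1 - p) ∧ 2 ∣ xy.2}
def U (p : ℤ) : Set (ℤ × ℤ) := {xy | xy.1^2 + xy.2^2 = p^2 ∧ 3 ∣ (xy.1 + p) ∧ 3 ∣ xy.2}

lemma odd_sq_mod4 {x : ℤ} (h : Odd x) : x^2 % 4 = 1 := by
  obtain ⟨k, rfl⟩ := h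
  have : (2*k+1)^2 = 4*(k^2 + k) + 1 := by ring
  omega

lemma even_sq_mod4 {x : ℤ} (h : Even x) : x^2 % 4 = 0 := by
  obtain ⟨k, rfl⟩ := h
  have : (k+k)^2 = 4*k^2 := by ring
  omega

lemma sq_mod3 (x : ℤ) : ((3:ℤ) ∣ x ∧ x^2 % 3 = 0) ∨ (¬(3:ℤ) ∣ x ∧ x^2 % 3 = 1) := by
  obtain ⟨k, r, hr, rfl⟩ : ∃ k r : ℤ, (r = 0 ∨ r = 1 ∨ r = 2) ∧ x = 3*k + r :=
    ⟨x / 3, x % 3, by omega, by omega⟩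
  have h0 : (3*k+(0:ℤ))^2 = 3*(3*k^2) := by ring
  have h1 : (3*k+(1:ℤ))^2 = 3*(3*k^2 + 2*k) + 1 := by ring
  have h2 : (3*k+(2:ℤ))^2 = 3*(3*k^2 + 4*k + 1) + 1 := by ring
  rcases hr with rfl | rfl | rfl
  · exact Or.inl ⟨⟨k + 0, by ring⟩, by omega⟩
  · exact Or.inr ⟨by omega, by omega⟩
  · exact Or.inr ⟨by omega, by omega⟩

lemma card_S_eq_two_mul (p : ℤ) (hp : Odd p) :
    Nat.card (S p) = 2 * Nat.card (T p) := by
  classical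
  have key : ∀ u : T p, ∀ j : Fin 2,
      (![((u:ℤ×ℤ).1, (u:ℤ×ℤ).2), ((u:ℤ×ℤ).2, (u:ℤ×ℤ).1)] : Fin 2 → ℤ×ℤ) j ∈ S p := by
    rintro ⟨⟨x, y⟩, hx1, hx2, hx3⟩ j
    dsimp only at hx1
    fin_cases j <;> simp only [S, Set.mem_setOf_eq] <;> simp <;> linarith [hx1]
  set f : T p × Fin 2 → S p := fun u =>
    ⟨![((u.1:ℤ×ℤ).1, (u.1:ℤ×ℤ).2), ((u.1:ℤ×ℤ).2, (u.1:ℤ×ℤ).1)] u.2, key u.1 u.2⟩ with hf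
  have hbij : Function.Bijective f := by
    constructor
    · rintro ⟨⟨⟨x, y⟩, hx1, hx2, hx3⟩, j⟩ ⟨⟨⟨a, b⟩, ha1, ha2, ha3⟩, k⟩ h
      simp only [hf, Subtype.mk.injEq] at h
      dsimp only at hx1 hx2 hx3 ha1 ha2 ha3
      obtain ⟨pp, rfl⟩ := hp
      have main : x = a ∧ y = b ∧ j = k := by
        fin_cases j <;> fin_cases k <;> simp_all [Prod.ext_iff, Fin.ext_iff] <;> omega
      simp [Prod.ext_iff, Subtype.ext_iff, main.1, main.2.1, main.2.2]
    · rintro ⟨⟨x, y⟩, hS⟩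
      simp only [S, Set.mem_setOf_eq] at hS
      obtain ⟨pp, rfl⟩ := hp
      have hpar : (2 ∣ x - (2*pp+1) ∧ 2 ∣ y) ∨ (2 ∣ y - (2*pp+1) ∧ 2 ∣ x) := by
        rcases Int.even_or_odd x with hx | hx <;> rcases Int.even_or_odd y with hy | hy
        · have := even_sq_mod4 hx; have := even_sq_mod4 hy
          have := odd_sq_mod4 (⟨pp, by ring⟩ : Odd (2*pp+1))
          omega
        · right
          obtain ⟨a, rfl⟩ := hx; obtain ⟨b, rfl⟩ := hy
          exact ⟨⟨b - pp, by ring⟩, ⟨a, by ring⟩⟩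
        · left
          obtain ⟨a, rfl⟩ := hx; obtain ⟨b, rfl⟩ := hy
          exact ⟨⟨a - pp, by ring⟩, ⟨b, by ring⟩⟩
        · have := odd_sq_mod4 hx; have := odd_sq_mod4 hy
          have := odd_sq_mod4 (⟨pp, by ring⟩ : Odd (2*pp+1))
          omega
      rcases hpar with ⟨h1, h2⟩ | ⟨h1, h2⟩
      · exact ⟨⟨⟨(x, y), hS, h1, h2⟩, 0⟩, rfl⟩
      · refine ⟨⟨⟨(y, x), by dsimp only [T, Set.mem_setOf_eq]; exact ⟨by linarith [hS], h1, h2⟩⟩, 1⟩, ?_⟩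
        apply Subtype.ext; simp [hf]
  have := Nat.card_eq_of_bijective f hbij
  rw [Nat.card_prod] at this
  simp only [Nat.card_eq_fintype_card, Fintype.card_fin] at this
  omega

lemma card_S_eq_four_mul (p : ℤ) (hp3 : ¬ (3:ℤ) ∣ p) :
    Nat.card (S p) = 4 * Nat.card (U p) := by
  classical
  have prime3 : Prime (3 : ℤ) := by norm_num
  have key : ∀ u : U p, ∀ j : Fin 4,
      (![((u:ℤ×ℤ).1, (u:ℤ×ℤ).2), (-(u:ℤ×ℤ).1, (u:ℤ×ℤ).2),
         ((u:ℤ×ℤ).2, (u:ℤ×ℤ).1), ((u:ℤ×ℤ).2, -(u:ℤ×ℤ).1)] : Fin 4 → ℤ×ℤ) j ∈ S p := by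
    rintro ⟨⟨x, y⟩, hx1, hx2, hx3⟩ j
    dsimp only at hx1
    fin_cases j <;> simp only [S, Set.mem_setOf_eq] <;> simp <;> linarith [hx1]
  set f : U p × Fin 4 → S p := fun u =>
    ⟨![((u.1:ℤ×ℤ).1, (u.1:ℤ×ℤ).2), (-(u.1:ℤ×ℤ).1, (u.1:ℤ×ℤ).2),
       ((u.1:ℤ×ℤ).2, (u.1:ℤ×ℤ).1), ((u.1:ℤ×ℤ).2, -(u.1:ℤ×ℤ).1)] u.2, key u.1 u.2⟩ with hf
  have hbij : Function.Bijective f := by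
    constructor
    · rintro ⟨⟨⟨x, y⟩, hx1, hx2, hx3⟩, j⟩ ⟨⟨⟨a, b⟩, ha1, ha2, ha3⟩, k⟩ h
      simp only [hf, Subtype.mk.injEq] at h
      dsimp only at hx1 hx2 hx3 ha1 ha2 ha3
      have main : x = a ∧ y = b ∧ j = k := by
        fin_cases j <;> fin_cases k <;> simp_all [Prod.ext_iff, Fin.ext_iff] <;> omega
      simp [Prod.ext_iff, Subtype.ext_iff, main.1, main.2.1, main.2.2]
    · rintro ⟨⟨x, y⟩, hS⟩
      simp only [S, Set.mem_setOf_eq] at hS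
      have hcases : ((3:ℤ) ∣ x ∧ ¬(3:ℤ) ∣ y) ∨ (¬(3:ℤ) ∣ x ∧ (3:ℤ) ∣ y) := by
        rcases sq_mod3 x with ⟨h1, h2⟩ | ⟨h1, h2⟩ <;>
          rcases sq_mod3 y with ⟨h3, h4⟩ | ⟨h3, h4⟩ <;>
          rcases sq_mod3 p with ⟨h5, h6⟩ | ⟨h5, h6⟩ <;>
          first
            | (exact absurd h5 hp3)
            | (left; exact ⟨h1, h3⟩)
            | (right; exact ⟨h1, h3⟩)
            | (exfalso; omega)
      have hfac : ∀ w : ℤ, (3:ℤ) ∣ w^2 - p^2 → (3:ℤ) ∣ w + p ∨ (3:ℤ) ∣ w - p := by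
        intro w hw
        have h3 : (3:ℤ) ∣ (w + p) * (w - p) := by
          have he : (w + p) * (w - p) = w^2 - p^2 := by ring
          rw [he]; exact hw
        exact (prime3.dvd_mul).mp h3
      rcases hcases with ⟨hx, hy⟩ | ⟨hx, hy⟩
      · have h3y : (3:ℤ) ∣ y + p ∨ (3:ℤ) ∣ y - p := by
          apply hfac
          have hx2 : (3:ℤ) ∣ x^2 := Dvd.dvd.pow hx (by norm_num)
          obtain ⟨c, hc⟩ := hx2
          exact ⟨-c, by linarith [hS]⟩
        rcases h3y with h3y | h3y
        · refine ⟨⟨⟨(y, x), ?_, h3y, hx⟩, 2⟩, ?_⟩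
          · dsimp [U]; linarith [hS]
          · apply Subtype.ext; simp [hf]
        · refine ⟨⟨⟨(-y, x), ?_, by omega, hx⟩, 3⟩, ?_⟩
          · dsimp [U]; linarith [hS]
          · apply Subtype.ext; simp [hf]
      · have h3x : (3:ℤ) ∣ x + p ∨ (3:ℤ) ∣ x - p := by
          apply hfac
          have hy2 : (3:ℤ) ∣ y^2 := Dvd.dvd.pow hy (by norm_num)
          obtain ⟨c, hc⟩ := hy2
          exact ⟨-c, by linarith [hS]⟩
        rcases h3x with h3x | h3x
        · exact ⟨⟨⟨(x, y), hS, h3x, hy⟩, 0⟩, rfl⟩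
        · refine ⟨⟨⟨(-x, y), ?_, by omega, hy⟩, 1⟩, ?_⟩
          · dsimp [U]; linarith [hS]
          · apply Subtype.ext; simp [hf]
  have := Nat.card_eq_of_bijective f hbij
  rw [Nat.card_prod] at this
  simp only [Nat.card_eq_fintype_card, Fintype.card_fin] at this
  omega


lemma norm_eq_sq (z : GaussianInt) : z.norm = z.re^2 + z.im^2 := by
  simp [Zsqrtd.norm]; ring

lemma card_S_pow (s : ℕ) : Nat.card (S ((5:ℤ)^s)) = 4 * (2*s + 1) := by
  have hps : ((5:ℤ)^s)^2 = 5^(2*s) := by rw [← pow_mul]; ring_nf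
  have e : {z : GaussianInt // z.norm = 5^(2*s)} ≃ S ((5:ℤ)^s) :=
    { toFun := fun z => ⟨(z.1.re, z.1.im), by
        have := z.2
        rw [norm_eq_sq] at this
        simp only [S, Set.mem_setOf_eq]
        rw [hps]; exact this⟩
      invFun := fun xy => ⟨⟨xy.1.1, xy.1.2⟩, by
        have := xy.2
        simp only [S, Set.mem_setOf_eq] at this
        rw [norm_eq_sq, ← hps]; exact this⟩
      left_inv := fun z => by apply Subtype.ext; rfl
      right_inv := fun xy => by apply Subtype.ext; rfl }
  rw [← Nat.card_congr e, card_norm_eq (2*s)]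

def V (p q : ℤ) : Set (ℤ × ℤ) :=
  {xy | xy.1^2 + xy.2^2 = p^2 ∧ q ∣ xy.1 + p ∧ q ∣ xy.2}

lemma cardC (p q : ℤ) (hq : 0 < q) :
    Nat.card {lm : ℤ × ℤ |
        ((lm.1 : ℝ) - (((p:ℚ)/(q:ℚ) : ℚ) : ℝ)) ^ 2 + (lm.2 : ℝ) ^ 2
          = (((p:ℚ)/(q:ℚ) : ℚ) : ℝ) ^ 2} = Nat.card (V p q) := by
  have hq0 : (q:ℝ) ≠ 0 := Int.cast_ne_zero.mpr (by omega)
  have hd : ((((p:ℚ)/(q:ℚ)) : ℚ) : ℝ) = (p:ℝ)/(q:ℝ) := by push_cast; ring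
  have hiff : ∀ l m : ℤ,
      (((l:ℝ) - (((p:ℚ)/(q:ℚ) : ℚ) : ℝ)) ^ 2 + (m:ℝ) ^ 2
        = (((p:ℚ)/(q:ℚ) : ℚ) : ℝ) ^ 2)
      ↔ ((q*l - p)^2 + (q*m)^2 = p^2) := by
    intro l m
    rw [hd]
    constructor
    · intro h
      have hr : ((q*l - p : ℤ):ℝ)^2 + ((q*m : ℤ):ℝ)^2 = ((p:ℤ):ℝ)^2 := by
        push_cast
        field_simp at h
        linear_combination h
      exact_mod_cast hr
    · intro h
      have hr : ((q*l - p : ℤ):ℝ)^2 + ((q*m : ℤ):ℝ)^2 = ((p:ℤ):ℝ)^2 := by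
        exact_mod_cast h
      push_cast at hr
      field_simp
      linear_combination hr
  set f : {lm : ℤ × ℤ |
      ((lm.1 : ℝ) - (((p:ℚ)/(q:ℚ) : ℚ) : ℝ)) ^ 2 + (lm.2 : ℝ) ^ 2
        = (((p:ℚ)/(q:ℚ) : ℚ) : ℝ) ^ 2} → V p q := fun lm =>
    ⟨(q * (lm:ℤ×ℤ).1 - p, q * (lm:ℤ×ℤ).2), by
      refine ⟨(hiff (lm:ℤ×ℤ).1 (lm:ℤ×ℤ).2).mp lm.2, ⟨(lm:ℤ×ℤ).1, by ring⟩,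
        ⟨(lm:ℤ×ℤ).2, rfl⟩⟩⟩ with hf
  have hbij : Function.Bijective f := by
    constructor
    · rintro ⟨⟨l, m⟩, hl⟩ ⟨⟨l', m'⟩, hl'⟩ h
      simp only [hf, Subtype.mk.injEq, Prod.mk.injEq] at h
      obtain ⟨h1, h2⟩ : q * l - p = q * l' - p ∧ q * m = q * m' := Prod.ext_iff.mp (congrArg Subtype.val h)
      apply Subtype.ext
      have e1 : l = l' := by
        have : q * l = q * l' := by omega
        exact mul_left_cancel₀ (by omega) this
      have e2 : m = m' := mul_left_cancel₀ (show q ≠ 0 by omega) h2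
      simp [e1, e2]
    · rintro ⟨⟨x, y⟩, hx1, hx2, hx3⟩
      dsimp only at hx1 hx2 hx3
      obtain ⟨c, hc⟩ := hx2
      obtain ⟨e, he⟩ := hx3
      have hxc : q * c - p = x := by linarith
      have hye : q * e = y := by linarith
      refine ⟨⟨(c, e), (hiff c e).mpr (by rw [hxc, hye]; exact hx1)⟩, ?_⟩
      apply Subtype.ext
      simp only [hf]
      rw [hxc, hye]
  exact Nat.card_eq_of_bijective f hbij

lemma V_one (p : ℤ) : V p 1 = S p := by
  ext ⟨x, y⟩
  simp [V, S]

lemma V_two (p : ℤ) : V p 2 = T p := by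
  ext ⟨x, y⟩
  simp only [V, T, Set.mem_setOf_eq]
  constructor <;> rintro ⟨h1, h2, h3⟩ <;> exact ⟨h1, by omega, h3⟩

lemma V_three (p : ℤ) : V p 3 = U p := rfl

end Stmt9

theorem stmt_9 (n : ℕ)
    (h : ∃ K : ℕ, Odd K ∧ (n = 4 * K ∨ n = 2 * K ∨ n = K)) :
    ∃ d : ℚ, 0 < d ∧
      Nat.card {lm : ℤ × ℤ |
        ((lm.1 : ℝ) - (d : ℝ)) ^ 2 + (lm.2 : ℝ) ^ 2 = (d : ℝ) ^ 2} = n := by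
  classical
  obtain ⟨K, hK, hcase⟩ := h
  obtain ⟨s, rfl⟩ := hK
  set p : ℤ := 5^s with hp
  have hodd : Odd p := Odd.pow (by decide)
  have hp3 : ¬ (3:ℤ) ∣ p := by
    intro h3
    have : (3:ℤ) ∣ 5 := (by norm_num : Prime (3:ℤ)).dvd_of_dvd_pow h3
    norm_num at this
  have hppos : (0:ℤ) < p := pow_pos (by norm_num) s
  have hcardS : Nat.card (Stmt9.S p) = 4 * (2*s + 1) := Stmt9.card_S_pow s
  have hq : ∀ q : ℤ, 0 < q → Nat.card {lm : ℤ × ℤ |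
        ((lm.1 : ℝ) - (((p:ℚ)/(q:ℚ) : ℚ) : ℝ)) ^ 2 + (lm.2 : ℝ) ^ 2
          = (((p:ℚ)/(q:ℚ) : ℚ) : ℝ) ^ 2} = Nat.card (Stmt9.V p q) := fun q hq =>
    Stmt9.cardC p q hq
  have hdpos : ∀ q : ℤ, 0 < q → 0 < ((p:ℚ)/(q:ℚ) : ℚ) := by
    intro q hq
    apply div_pos
    · exact_mod_cast hppos
    · exact_mod_cast hq
  rcases hcase with rfl | rfl | rfl
  · refine ⟨(p:ℚ)/((1:ℤ):ℚ), hdpos 1 one_pos, ?_⟩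
    rw [hq 1 one_pos, Stmt9.V_one, hcardS]
  · refine ⟨(p:ℚ)/((2:ℤ):ℚ), hdpos 2 two_pos, ?_⟩
    rw [hq 2 two_pos, Stmt9.V_two]
    have := Stmt9.card_S_eq_two_mul p hodd
    omega
  · refine ⟨(p:ℚ)/((3:ℤ):ℚ), hdpos 3 three_pos, ?_⟩
    rw [hq 3 three_pos, Stmt9.V_three]
    have := Stmt9.card_S_eq_four_mul p hp3
    omega
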